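/- Let X be a geodesic metric space satisfying the CAT(0) comparison inequality. Let m ≥ 3, let v₁, …, v_m ∈ X be pairwise distinct points (indices taken mod m), and for each i = 1, …, m let γᵢ be a geodesic from vᵢ to vᵢ₊₁. For each i let φᵢ be the Alexandrov angle at vᵢ between the geodesic γᵢ (from vᵢ to vᵢ₊₁) and the reversal of γᵢ₋₁ (the geodesic t ↦ γᵢ₋₁(d(vᵢ₋₁,vᵢ) − t) from vᵢ to vᵢ₋₁). Then φ₁ + φ₂ + ⋯ + φ_m ≤ (m − 2)·π. -/

import Mathlib

/-- `γ` is a geodesic from `x` to `y`: it is parametrised by arc length on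
`[0, dist x y]`, starting at `x` and ending at `y`. -/
def IsGeodesic {X : Type*} [MetricSpace X] (x y : X) (γ : ℝ → X) : Prop :=
  γ 0 = x ∧ γ (dist x y) = y ∧
    ∀ s ∈ Set.Icc (0 : ℝ) (dist x y), ∀ t ∈ Set.Icc (0 : ℝ) (dist x y),
      dist (γ s) (γ t) = |s - t|

/-- A geodesic metric space: every pair of points is joined by a geodesic. -/
def IsGeodesicSpace (X : Type*) [MetricSpace X] : Prop :=
  ∀ x y : X, ∃ γ : ℝ → X, IsGeodesic x y γ

/-- The comparison angle `∠̄ₓ(p,q)`: the angle at the vertex corresponding to `x`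
of a Euclidean triangle with the same side lengths as the triple `x, p, q`. -/
noncomputable def compAngle {X : Type*} [MetricSpace X] (x p q : X) : ℝ :=
  Real.arccos
    ((dist x p ^ 2 + dist x q ^ 2 - dist p q ^ 2) / (2 * dist x p * dist x q))

/-- The CAT(0) comparison inequality. -/
def SatisfiesCAT0 (X : Type*) [MetricSpace X] : Prop :=
  ∀ (x y z : X) (γ₁ γ₂ : ℝ → X), IsGeodesic x y γ₁ → IsGeodesic x z γ₂ →
    ∀ s ∈ Set.Icc (0 : ℝ) (dist x y), ∀ t ∈ Set.Icc (0 : ℝ) (dist x z),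
      dist (γ₁ s) (γ₂ t) ≤
        Real.sqrt (s ^ 2 + t ^ 2 - 2 * s * t * Real.cos (compAngle x y z))

/-- The Alexandrov angle at `x` between a geodesic `γ` from `x` to `y` and a
geodesic `γ'` from `x` to `z`. -/
noncomputable def alexAngle {X : Type*} [MetricSpace X] (x y z : X)
    (γ γ' : ℝ → X) : ℝ :=
  ⨅ ε : {e : ℝ // 0 < e},
    sSup {θ : ℝ | ∃ s t : ℝ, 0 < s ∧ s < ε.1 ∧ 0 < t ∧ t < ε.1 ∧
      s ≤ dist x y ∧ t ≤ dist x z ∧ θ = compAngle x (γ s) (γ' t)}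

open Real Set

section Aux

variable {X : Type*} [MetricSpace X]

lemma compAngle_nonneg (x p q : X) : 0 ≤ compAngle x p q := Real.arccos_nonneg _

lemma compAngle_le_pi (x p q : X) : compAngle x p q ≤ π := Real.arccos_le_pi _

lemma compAngle_comm (x p q : X) : compAngle x p q = compAngle x q p := by
  unfold compAngle
  rw [dist_comm p q]
  ring_nf

lemma cos_compAngle (x p q : X) (hp : x ≠ p) (hq : x ≠ q) :
    Real.cos (compAngle x p q) =
      (dist x p ^ 2 + dist x q ^ 2 - dist p q ^ 2) / (2 * dist x p * dist x q) := by
  have hxp : 0 < dist x p := dist_pos.2 hp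
  have hxq : 0 < dist x q := dist_pos.2 hq
  apply Real.cos_arccos
  · have h := dist_triangle p x q
    rw [dist_comm p x] at h
    rw [le_div_iff₀ (by positivity)]
    nlinarith [dist_nonneg (x := p) (y := q)]
  · have h1 := abs_dist_sub_le x p q
    rw [div_le_one (by positivity)]
    have h2 : |dist x p - dist x q| ≤ dist p q := by
      have := abs_dist_sub_le p q x
      rwa [dist_comm p x, dist_comm q x] at this
    have := abs_le.1 h2
    nlinarith [dist_nonneg (x := p) (y := q)]

/-- Law of cosines defining property of the comparison angle. -/
lemma dist_sq_compAngle (x p q : X) (hp : x ≠ p) (hq : x ≠ q) :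
    dist p q ^ 2 = dist x p ^ 2 + dist x q ^ 2 -
      2 * dist x p * dist x q * Real.cos (compAngle x p q) := by
  have hxp : 0 < dist x p := dist_pos.2 hp
  have hxq : 0 < dist x q := dist_pos.2 hq
  rw [cos_compAngle x p q hp hq]
  field_simp
  ring

lemma IsGeodesic.dist_param {x y : X} {γ : ℝ → X} (h : IsGeodesic x y γ)
    {s : ℝ} (h0 : 0 ≤ s) (h1 : s ≤ dist x y) : dist x (γ s) = s := by
  have := h.2.2 0 ⟨le_refl 0, dist_nonneg⟩ s ⟨h0, h1⟩
  rw [h.1] at this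
  rw [this, abs_of_nonpos (by linarith)]
  ring

/-- A geodesic restricted to an initial segment is a geodesic. -/
lemma IsGeodesic.restrict {x y : X} {γ : ℝ → X} (h : IsGeodesic x y γ)
    {s : ℝ} (h0 : 0 ≤ s) (h1 : s ≤ dist x y) : IsGeodesic x (γ s) γ := by
  have hd : dist x (γ s) = s := h.dist_param h0 h1
  refine ⟨h.1, by rw [hd], ?_⟩
  intro a ha b hb
  rw [hd] at ha hb
  exact h.2.2 a ⟨ha.1, ha.2.trans h1⟩ b ⟨hb.1, hb.2.trans h1⟩

/-- The reversal of a geodesic is a geodesic. -/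
lemma IsGeodesic.rev {x y : X} {γ : ℝ → X} (h : IsGeodesic x y γ) :
    IsGeodesic y x (fun t => γ (dist x y - t)) := by
  have hc : dist y x = dist x y := dist_comm y x
  refine ⟨by simpa using h.2.1, ?_, ?_⟩
  · rw [hc]; simpa using h.1
  · intro a ha b hb
    rw [hc] at ha hb
    have := h.2.2 (dist x y - a) ⟨by linarith [ha.2], by linarith [ha.1]⟩
      (dist x y - b) ⟨by linarith [hb.2], by linarith [hb.1]⟩
    rw [this]
    rw [abs_sub_comm]
    congr 1; ring

/-- The window set appearing in `alexAngle`. -/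
def wset (x y z : X) (γ γ' : ℝ → X) (ε : ℝ) : Set ℝ :=
  {θ : ℝ | ∃ s t : ℝ, 0 < s ∧ s < ε ∧ 0 < t ∧ t < ε ∧
    s ≤ dist x y ∧ t ≤ dist x z ∧ θ = compAngle x (γ s) (γ' t)}

lemma alexAngle_eq (x y z : X) (γ γ' : ℝ → X) :
    alexAngle x y z γ γ' = ⨅ ε : {e : ℝ // 0 < e}, sSup (wset x y z γ γ' ε.1) := rfl

lemma wset_subset (x y z : X) (γ γ' : ℝ → X) (ε : ℝ) :
    wset x y z γ γ' ε ⊆ Icc 0 π := by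
  rintro θ ⟨s, t, _, _, _, _, _, _, rfl⟩
  exact ⟨compAngle_nonneg _ _ _, compAngle_le_pi _ _ _⟩

lemma wset_bddAbove (x y z : X) (γ γ' : ℝ → X) (ε : ℝ) :
    BddAbove (wset x y z γ γ' ε) :=
  BddAbove.mono (wset_subset x y z γ γ' ε) bddAbove_Icc

lemma wset_nonempty (x y z : X) (γ γ' : ℝ → X) {ε : ℝ} (hε : 0 < ε)
    (hy : x ≠ y) (hz : x ≠ z) : (wset x y z γ γ' ε).Nonempty := by
  have hdy : 0 < dist x y := dist_pos.2 hy
  have hdz : 0 < dist x z := dist_pos.2 hz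
  refine ⟨compAngle x (γ (min (ε/2) (dist x y))) (γ' (min (ε/2) (dist x z))),
    min (ε/2) (dist x y), min (ε/2) (dist x z), by positivity,
    lt_of_le_of_lt (min_le_left _ _) (by linarith), by positivity,
    lt_of_le_of_lt (min_le_left _ _) (by linarith), min_le_right _ _, min_le_right _ _, rfl⟩

lemma sSup_wset_nonneg (x y z : X) (γ γ' : ℝ → X) {ε : ℝ} (hε : 0 < ε)
    (hy : x ≠ y) (hz : x ≠ z) : 0 ≤ sSup (wset x y z γ γ' ε) := by
  obtain ⟨θ, hθ⟩ := wset_nonempty x y z γ γ' hε hy hz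
  have h0 : 0 ≤ θ := (wset_subset x y z γ γ' ε hθ).1
  exact h0.trans (le_csSup (wset_bddAbove x y z γ γ' ε) hθ)

lemma bddBelow_wset_range (x y z : X) (γ γ' : ℝ → X) (hy : x ≠ y) (hz : x ≠ z) :
    BddBelow (Set.range fun ε : {e : ℝ // 0 < e} => sSup (wset x y z γ γ' ε.1)) := by
  refine ⟨0, ?_⟩
  rintro r ⟨ε, rfl⟩
  exact sSup_wset_nonneg x y z γ γ' ε.2 hy hz

lemma alexAngle_nonneg (x y z : X) (γ γ' : ℝ → X) (hy : x ≠ y) (hz : x ≠ z) :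
    0 ≤ alexAngle x y z γ γ' := by
  rw [alexAngle_eq]
  exact le_ciInf fun ε => sSup_wset_nonneg x y z γ γ' ε.2 hy hz

lemma alexAngle_le_sSup (x y z : X) (γ γ' : ℝ → X) (hy : x ≠ y) (hz : x ≠ z)
    {ε : ℝ} (hε : 0 < ε) : alexAngle x y z γ γ' ≤ sSup (wset x y z γ γ' ε) := by
  rw [alexAngle_eq]
  exact ciInf_le (bddBelow_wset_range x y z γ γ' hy hz) ⟨ε, hε⟩

/-- Monotonicity of comparison angles along geodesics, in a CAT(0) space. -/
lemma compAngle_mono (hCAT : SatisfiesCAT0 X) {x y z : X} {γ γ' : ℝ → X}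
    (hγ : IsGeodesic x y γ) (hγ' : IsGeodesic x z γ')
    {s s₀ t t₀ : ℝ} (hs : 0 < s) (hss : s ≤ s₀) (hs₀ : s₀ ≤ dist x y)
    (ht : 0 < t) (htt : t ≤ t₀) (ht₀ : t₀ ≤ dist x z) :
    compAngle x (γ s) (γ' t) ≤ compAngle x (γ s₀) (γ' t₀) := by
  have hs0 : (0:ℝ) ≤ s₀ := le_trans (le_of_lt hs) hss
  have ht0 : (0:ℝ) ≤ t₀ := le_trans (le_of_lt ht) htt
  have hds₀ : dist x (γ s₀) = s₀ := hγ.dist_param hs0 hs₀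
  have hdt₀ : dist x (γ' t₀) = t₀ := hγ'.dist_param ht0 ht₀
  have hds : dist x (γ s) = s := hγ.dist_param hs.le (hss.trans hs₀)
  have hdt : dist x (γ' t) = t := hγ'.dist_param ht.le (htt.trans ht₀)
  set Θ := compAngle x (γ s₀) (γ' t₀) with hΘ
  have hcat := hCAT x (γ s₀) (γ' t₀) γ γ' (hγ.restrict hs0 hs₀) (hγ'.restrict ht0 ht₀)
    s (by rw [hds₀]; exact ⟨hs.le, hss⟩) t (by rw [hdt₀]; exact ⟨ht.le, htt⟩)
  have hE : (0:ℝ) ≤ s ^ 2 + t ^ 2 - 2 * s * t * Real.cos Θ := by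
    nlinarith [Real.cos_le_one Θ, sq_nonneg (s - t), mul_pos hs ht]
  have hd2 : dist (γ s) (γ' t) ^ 2 ≤ s ^ 2 + t ^ 2 - 2 * s * t * Real.cos Θ := by
    have := Real.sq_sqrt hE
    nlinarith [dist_nonneg (x := γ s) (y := γ' t), Real.sqrt_nonneg
      (s ^ 2 + t ^ 2 - 2 * s * t * Real.cos Θ)]
  have hgoal : Real.cos Θ ≤
      (dist x (γ s) ^ 2 + dist x (γ' t) ^ 2 - dist (γ s) (γ' t) ^ 2) /
        (2 * dist x (γ s) * dist x (γ' t)) := by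
    rw [hds, hdt, le_div_iff₀ (by positivity)]
    nlinarith
  calc compAngle x (γ s) (γ' t) = Real.arccos _ := rfl
    _ ≤ Real.arccos (Real.cos Θ) := by
        unfold Real.arccos
        have := Real.monotone_arcsin hgoal
        linarith
    _ = Θ := Real.arccos_cos (compAngle_nonneg _ _ _) (compAngle_le_pi _ _ _)

/-- In a CAT(0) space the Alexandrov angle is at most any comparison angle
along the two geodesics. -/
lemma alexAngle_le_compAngle (hCAT : SatisfiesCAT0 X) {x y z : X} {γ γ' : ℝ → X}
    (hγ : IsGeodesic x y γ) (hγ' : IsGeodesic x z γ')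
    {s t : ℝ} (hs : 0 < s) (hsd : s ≤ dist x y) (ht : 0 < t) (htd : t ≤ dist x z) :
    alexAngle x y z γ γ' ≤ compAngle x (γ s) (γ' t) := by
  have hy : x ≠ y := by
    intro h; rw [← h] at hsd; simp at hsd; linarith
  have hz : x ≠ z := by
    intro h; rw [← h] at htd; simp at htd; linarith
  have hmin : 0 < min s t := lt_min hs ht
  refine (alexAngle_le_sSup x y z γ γ' hy hz hmin).trans (csSup_le
    (wset_nonempty x y z γ γ' hmin hy hz) ?_)
  rintro θ ⟨s', t', hs', hs'ε, ht', ht'ε, hs'd, ht'd, rfl⟩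
  exact compAngle_mono hCAT hγ hγ' hs' (le_of_lt (lt_of_lt_of_le hs'ε (min_le_left _ _))) hsd
    ht' (le_of_lt (lt_of_lt_of_le ht'ε (min_le_right _ _))) htd

lemma alexAngle_le_endpoints (hCAT : SatisfiesCAT0 X) {x y z : X} {γ γ' : ℝ → X}
    (hγ : IsGeodesic x y γ) (hγ' : IsGeodesic x z γ') (hy : x ≠ y) (hz : x ≠ z) :
    alexAngle x y z γ γ' ≤ compAngle x y z := by
  have h := alexAngle_le_compAngle hCAT hγ hγ' (dist_pos.2 hy) (le_refl _)
    (dist_pos.2 hz) (le_refl _)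
  rwa [hγ.2.1, hγ'.2.1] at h

-- F1: triangle angle sum
noncomputable section
open Complex in
lemma compAngle_eq_angle (p q r : ℂ) (hq : p ≠ q) (hr : p ≠ r) :
    compAngle p q r = EuclideanGeometry.angle q p r := by
  have hdq : (0:ℝ) < dist p q := dist_pos.2 hq
  have hdr : (0:ℝ) < dist p r := dist_pos.2 hr
  have law := EuclideanGeometry.law_cos q p r (V := ℂ)
  have hcos : Real.cos (EuclideanGeometry.angle q p r) =
      (dist p q ^ 2 + dist p r ^ 2 - dist q r ^ 2) / (2 * dist p q * dist p r) := by
    rw [dist_comm q p, dist_comm r p] at law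
    field_simp
    nlinarith [law]
  unfold compAngle
  rw [← hcos, Real.arccos_cos (EuclideanGeometry.angle_nonneg _ _ _)
    (EuclideanGeometry.angle_le_pi _ _ _)]

lemma compAngle_triangle_sum {X : Type*} [MetricSpace X] (x y z : X)
    (hxy : x ≠ y) (hyz : y ≠ z) (hzx : z ≠ x) :
    compAngle x y z + compAngle y z x + compAngle z x y = π := by
  have hdxy : (0:ℝ) < dist x y := dist_pos.2 hxy
  have hdyz : (0:ℝ) < dist y z := dist_pos.2 hyz
  have hdxz : (0:ℝ) < dist x z := dist_pos.2 (Ne.symm hzx)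
  set θ := compAngle x y z with hθ
  set A : ℂ := 0 with hA
  set B : ℂ := ((dist x y : ℝ) : ℂ) with hB
  set C : ℂ := (dist x z * Real.cos θ : ℝ) + (dist x z * Real.sin θ : ℝ) * Complex.I with hC
  have dAB : dist A B = dist x y := by
    rw [Complex.dist_eq]
    simp [hA, hB, abs_of_nonneg dist_nonneg]
  have dAC : dist A C = dist x z := by
    rw [Complex.dist_eq]
    have : ‖A - C‖ ^ 2 = dist x z ^ 2 := by
      rw [← Complex.normSq_eq_norm_sq, Complex.normSq_apply]
      simp [hA, hC, Complex.cos_ofReal_re, Complex.sin_ofReal_re]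
      nlinarith [Real.sin_sq_add_cos_sq θ]
    nlinarith [norm_nonneg (A - C)]
  have dBC : dist B C = dist y z := by
    rw [Complex.dist_eq]
    have h2 : ‖B - C‖ ^ 2 = dist y z ^ 2 := by
      rw [← Complex.normSq_eq_norm_sq, Complex.normSq_apply]
      have hlaw := dist_sq_compAngle x y z hxy (fun h => hzx h.symm)
      simp [hB, hC, Complex.cos_ofReal_re, Complex.sin_ofReal_re]
      nlinarith [Real.sin_sq_add_cos_sq θ]
    nlinarith [norm_nonneg (B - C), dist_nonneg (x := y) (y := z)]
  have hAB : A ≠ B := dist_pos.1 (by rw [dAB]; exact hdxy)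
  have hAC : A ≠ C := dist_pos.1 (by rw [dAC]; exact hdxz)
  have hBC : B ≠ C := dist_pos.1 (by rw [dBC]; exact hdyz)
  have e1 : compAngle x y z = EuclideanGeometry.angle B A C := by
    rw [← compAngle_eq_angle A B C hAB hAC]
    unfold compAngle
    rw [dAB, dAC, dBC]
  have e2 : compAngle y z x = EuclideanGeometry.angle C B A := by
    rw [← compAngle_eq_angle B C A hBC (Ne.symm hAB)]
    unfold compAngle
    rw [dBC, dist_comm B A, dAB, dist_comm C A, dAC, dist_comm x y, dist_comm z x]
  have e3 : compAngle z x y = EuclideanGeometry.angle A C B := by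
    rw [← compAngle_eq_angle C A B (Ne.symm hAC) (Ne.symm hBC)]
    unfold compAngle
    rw [dist_comm C A, dAC, dist_comm C B, dBC, dist_comm z x, dist_comm z y]
    rw [dAB]
  rw [hθ, e1, e2, e3]
  have := EuclideanGeometry.angle_add_angle_add_angle_eq_pi (V := ℂ) (p₁ := C) (p₂ := A) (p₃ := B)
    hAC
  -- ∠ C A B + ∠ A B C + ∠ B C A = π
  rw [EuclideanGeometry.angle_comm C A B] at this
  rw [EuclideanGeometry.angle_comm A B C] at this
  rw [EuclideanGeometry.angle_comm B C A] at this
  linarith [this]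
end

/-- Planar construction: a point on the segment between two points at distance δ
from the origin at angular separation φ₁ + φ₂, lying on the ray at angle φ₁. -/
lemma planar_key (δ φ₁ φ₂ : ℝ) (hδ : 0 < δ) (hφ₁0 : 0 < φ₁) (hφ₂0 : 0 < φ₂)
    (hsum : φ₁ + φ₂ < π) :
    ∃ w A B C : ℝ, 0 < w ∧ w ≤ δ ∧ A + B = C ∧ 0 ≤ A ∧ 0 ≤ B ∧
      A ^ 2 = δ ^ 2 + w ^ 2 - 2 * δ * w * Real.cos φ₁ ∧
      B ^ 2 = w ^ 2 + δ ^ 2 - 2 * w * δ * Real.cos φ₂ ∧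
      C ^ 2 = δ ^ 2 + δ ^ 2 - 2 * δ * δ * Real.cos (φ₁ + φ₂) := by
  have hs₁ : 0 < Real.sin φ₁ := Real.sin_pos_of_pos_of_lt_pi hφ₁0 (by linarith)
  have hs₂ : 0 < Real.sin φ₂ := Real.sin_pos_of_pos_of_lt_pi hφ₂0 (by linarith)
  have hsκ : 0 < Real.sin (φ₁ + φ₂) :=
    Real.sin_pos_of_pos_of_lt_pi (by linarith) hsum
  have hden : 0 < Real.sin φ₁ + Real.sin φ₂ := by linarith
  set w : ℝ := δ * Real.sin (φ₁ + φ₂) / (Real.sin φ₁ + Real.sin φ₂) with hwd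
  set lam : ℝ := Real.sin φ₁ / (Real.sin φ₁ + Real.sin φ₂) with hlamd
  have hw0 : 0 < w := div_pos (mul_pos hδ hsκ) hden
  have hwδ : w ≤ δ := by
    rw [hwd, div_le_iff₀ hden, Real.sin_add]
    nlinarith [mul_nonneg (mul_nonneg hδ.le hs₁.le) (sub_nonneg.2 (Real.cos_le_one φ₂)),
      mul_nonneg (mul_nonneg hδ.le hs₂.le) (sub_nonneg.2 (Real.cos_le_one φ₁))]
  have hlam0 : 0 ≤ lam := (div_pos hs₁ hden).le
  set P : ℂ := ((δ : ℝ) : ℂ) with hPd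
  set Q : ℂ := ((w * Real.cos φ₁ : ℝ) : ℂ) + ((w * Real.sin φ₁ : ℝ) : ℂ) * Complex.I with hQd
  set R : ℂ := ((δ * Real.cos (φ₁ + φ₂) : ℝ) : ℂ) +
    ((δ * Real.sin (φ₁ + φ₂) : ℝ) : ℂ) * Complex.I with hRd
  have hsinsub : Real.sin (φ₁ + φ₂) * Real.cos φ₁ - Real.cos (φ₁ + φ₂) * Real.sin φ₁
      = Real.sin φ₂ := by
    rw [← Real.sin_sub]; congr 1; ring
  have hcossub : Real.cos (φ₁ + φ₂) * Real.cos φ₁ + Real.sin (φ₁ + φ₂) * Real.sin φ₁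
      = Real.cos φ₂ := by
    rw [← Real.cos_sub]; congr 1; ring
  have hPQ : P - Q = ((lam : ℝ) : ℂ) * (P - R) := by
    rw [Complex.ext_iff]
    constructor
    · simp only [hPd, hQd, hRd, Complex.sub_re, Complex.add_re, Complex.mul_re,
        Complex.ofReal_re, Complex.ofReal_im, Complex.I_re, Complex.I_im,
        Complex.sub_im, Complex.add_im, Complex.mul_im]
      rw [hwd, hlamd]
      field_simp
      nlinarith [hsinsub]
    · simp only [hPd, hQd, hRd, Complex.sub_re, Complex.add_re, Complex.mul_re,
        Complex.ofReal_re, Complex.ofReal_im, Complex.I_re, Complex.I_im,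
        Complex.sub_im, Complex.add_im, Complex.mul_im]
      rw [hwd, hlamd]
      field_simp
      ring
  have hQR : Q - R = ((1 - lam : ℝ) : ℂ) * (P - R) := by
    have h : Q - R = (P - R) - (P - Q) := by ring
    rw [h, hPQ]
    push_cast
    ring
  have hdPQ : dist P Q = lam * dist P R := by
    rw [Complex.dist_eq, Complex.dist_eq, hPQ, norm_mul, Complex.norm_real, Real.norm_eq_abs,
      abs_of_nonneg hlam0]
  have hlam1 : lam ≤ 1 := by rw [hlamd, div_le_one hden]; linarith
  have hdQR : dist Q R = (1 - lam) * dist P R := by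
    rw [Complex.dist_eq, Complex.dist_eq, hQR, norm_mul, Complex.norm_real, Real.norm_eq_abs,
      abs_of_nonneg (by linarith : (0:ℝ) ≤ 1 - lam)]
  refine ⟨w, dist P Q, dist Q R, dist P R, hw0, hwδ, by rw [hdPQ, hdQR]; ring,
    dist_nonneg, dist_nonneg, ?_, ?_, ?_⟩
  · rw [Complex.dist_eq, Complex.sq_norm, Complex.normSq_apply]
    simp only [hPd, hQd, Complex.sub_re, Complex.add_re, Complex.mul_re,
      Complex.ofReal_re, Complex.ofReal_im, Complex.I_re, Complex.I_im,
      Complex.sub_im, Complex.add_im, Complex.mul_im]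
    linear_combination (w ^ 2) * Real.sin_sq_add_cos_sq φ₁
  · rw [Complex.dist_eq, Complex.sq_norm, Complex.normSq_apply]
    simp only [hQd, hRd, Complex.sub_re, Complex.add_re, Complex.mul_re,
      Complex.ofReal_re, Complex.ofReal_im, Complex.I_re, Complex.I_im,
      Complex.sub_im, Complex.add_im, Complex.mul_im]
    linear_combination (w ^ 2) * Real.sin_sq_add_cos_sq φ₁ +
      (δ ^ 2) * Real.sin_sq_add_cos_sq (φ₁ + φ₂) - (2 * w * δ) * hcossub
  · rw [Complex.dist_eq, Complex.sq_norm, Complex.normSq_apply]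
    simp only [hPd, hRd, Complex.sub_re, Complex.add_re, Complex.mul_re,
      Complex.ofReal_re, Complex.ofReal_im, Complex.I_re, Complex.I_im,
      Complex.sub_im, Complex.add_im, Complex.mul_im]
    linear_combination (δ ^ 2) * Real.sin_sq_add_cos_sq (φ₁ + φ₂)

lemma lt_of_sq_lt_sq' {a b : ℝ} (ha : 0 ≤ a) (hb : 0 ≤ b) (h : a ^ 2 < b ^ 2) :
    a < b := by nlinarith

lemma le_of_sq_le_sq' {a b : ℝ} (ha : 0 ≤ a) (hb : 0 ≤ b) (h : a ^ 2 ≤ b ^ 2) :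
    a ≤ b := by nlinarith

/-- Triangle inequality for Alexandrov angles at a point in a CAT(0) space. -/
lemma alexAngle_subadd {X : Type*} [MetricSpace X] (hCAT : SatisfiesCAT0 X)
    {x a b c : X} {g₁ g₂ g₃ : ℝ → X}
    (h₁ : IsGeodesic x a g₁) (h₂ : IsGeodesic x b g₂) (h₃ : IsGeodesic x c g₃)
    (ha : x ≠ a) (hb : x ≠ b) (hc : x ≠ c) :
    alexAngle x a c g₁ g₃ ≤ alexAngle x a b g₁ g₂ + alexAngle x b c g₂ g₃ := by
  by_contra hcon
  push_neg at hcon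
  set α := alexAngle x a b g₁ g₂ with hαd
  set β := alexAngle x b c g₂ g₃ with hβd
  set κ := alexAngle x a c g₁ g₃ with hκd
  have hα0 : 0 ≤ α := alexAngle_nonneg _ _ _ _ _ ha hb
  have hβ0 : 0 ≤ β := alexAngle_nonneg _ _ _ _ _ hb hc
  have hκπ : κ ≤ π :=
    (alexAngle_le_endpoints hCAT h₁ h₃ ha hc).trans (compAngle_le_pi _ _ _)
  set ε := (κ - α - β) / 4 with hεd
  have hε0 : 0 < ε := by rw [hεd]; linarith
  set φ₁ := α + ε with hφ₁d
  set φ₂ := β + ε with hφ₂d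
  have hφ₁0 : 0 < φ₁ := by rw [hφ₁d]; linarith
  have hφ₂0 : 0 < φ₂ := by rw [hφ₂d]; linarith
  have hsumκ : φ₁ + φ₂ < κ := by rw [hφ₁d, hφ₂d, hεd]; linarith
  have hsumπ : φ₁ + φ₂ < π := lt_of_lt_of_le hsumκ hκπ
  have hαφ₁ : α < φ₁ := by rw [hφ₁d]; linarith
  have hβφ₂ : β < φ₂ := by rw [hφ₂d]; linarith
  obtain ⟨ε₁, hε₁⟩ : ∃ ε₁ : {e : ℝ // 0 < e}, sSup (wset x a b g₁ g₂ ε₁.1) < φ₁ := by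
    apply exists_lt_of_ciInf_lt
    rw [← alexAngle_eq, ← hαd]; exact hαφ₁
  obtain ⟨ε₂, hε₂⟩ : ∃ ε₂ : {e : ℝ // 0 < e}, sSup (wset x b c g₂ g₃ ε₂.1) < φ₂ := by
    apply exists_lt_of_ciInf_lt
    rw [← alexAngle_eq, ← hβd]; exact hβφ₂
  have hκle : ∀ s t : ℝ, 0 < s → s ≤ dist x a → 0 < t → t ≤ dist x c →
      κ ≤ compAngle x (g₁ s) (g₃ t) := by
    intro s t hs hsd ht htd
    rw [hκd]
    exact alexAngle_le_compAngle hCAT h₁ h₃ hs hsd ht htd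
  clear_value α β κ ε φ₁ φ₂
  clear hαd hβd hκd hεd hφ₁d hφ₂d hcon
  have hDa : 0 < dist x a := dist_pos.2 ha
  have hDb : 0 < dist x b := dist_pos.2 hb
  have hDc : 0 < dist x c := dist_pos.2 hc
  set δ := min (min (ε₁.1 / 2) (ε₂.1 / 2)) (min (dist x a) (min (dist x b) (dist x c)))
    with hδd
  have hδ0 : 0 < δ :=
    lt_min (lt_min (by linarith [ε₁.2]) (by linarith [ε₂.2])) (lt_min hDa (lt_min hDb hDc))
  have hδε₁ : δ < ε₁.1 := by
    calc δ ≤ ε₁.1 / 2 := (min_le_left _ _).trans (min_le_left _ _)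
      _ < ε₁.1 := by linarith [ε₁.2]
  have hδε₂ : δ < ε₂.1 := by
    calc δ ≤ ε₂.1 / 2 := (min_le_left _ _).trans (min_le_right _ _)
      _ < ε₂.1 := by linarith [ε₂.2]
  have hδa : δ ≤ dist x a := (min_le_right _ _).trans (min_le_left _ _)
  have hδb : δ ≤ dist x b := (min_le_right _ _).trans ((min_le_right _ _).trans (min_le_left _ _))
  have hδc : δ ≤ dist x c := (min_le_right _ _).trans ((min_le_right _ _).trans (min_le_right _ _))
  clear_value δ
  clear hδd
  have hF12 : ∀ s t : ℝ, 0 < s → s ≤ δ → 0 < t → t ≤ δ →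
      compAngle x (g₁ s) (g₂ t) < φ₁ := fun s t hs hsδ ht htδ =>
    lt_of_le_of_lt (le_csSup (wset_bddAbove x a b g₁ g₂ ε₁.1)
      ⟨s, t, hs, lt_of_le_of_lt hsδ hδε₁, ht, lt_of_le_of_lt htδ hδε₁,
        hsδ.trans hδa, htδ.trans hδb, rfl⟩) hε₁
  have hF23 : ∀ s t : ℝ, 0 < s → s ≤ δ → 0 < t → t ≤ δ →
      compAngle x (g₂ s) (g₃ t) < φ₂ := fun s t hs hsδ ht htδ =>
    lt_of_le_of_lt (le_csSup (wset_bddAbove x b c g₂ g₃ ε₂.1)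
      ⟨s, t, hs, lt_of_le_of_lt hsδ hδε₂, ht, lt_of_le_of_lt htδ hδε₂,
        hsδ.trans hδb, htδ.trans hδc, rfl⟩) hε₂
  have hθκ : κ ≤ compAngle x (g₁ δ) (g₃ δ) := hκle δ δ hδ0 hδa hδ0 hδc
  set θ := compAngle x (g₁ δ) (g₃ δ) with hθd
  have hθπ : θ ≤ π := compAngle_le_pi _ _ _
  have hxg1 : x ≠ g₁ δ := by
    refine dist_pos.1 ?_
    rw [h₁.dist_param hδ0.le hδa]; exact hδ0
  have hxg3 : x ≠ g₃ δ := by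
    refine dist_pos.1 ?_
    rw [h₃.dist_param hδ0.le hδc]; exact hδ0
  have hL : dist (g₁ δ) (g₃ δ) ^ 2 = δ ^ 2 + δ ^ 2 - 2 * δ * δ * Real.cos θ := by
    have h := dist_sq_compAngle x (g₁ δ) (g₃ δ) hxg1 hxg3
    rwa [h₁.dist_param hδ0.le hδa, h₃.dist_param hδ0.le hδc] at h
  -- planar construction
  obtain ⟨w, A, B, C, hw0, hwδ, hABC, hA0, hB0, hA2, hB2, hC2⟩ :=
    planar_key δ φ₁ φ₂ hδ0 hφ₁0 hφ₂0 hsumπ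
  have hxg2 : x ≠ g₂ w := by
    refine dist_pos.1 ?_
    rw [h₂.dist_param hw0.le (hwδ.trans hδb)]; exact hw0
  have hd12 : dist (g₁ δ) (g₂ w) ^ 2 =
      δ ^ 2 + w ^ 2 - 2 * δ * w * Real.cos (compAngle x (g₁ δ) (g₂ w)) := by
    have h := dist_sq_compAngle x (g₁ δ) (g₂ w) hxg1 hxg2
    rwa [h₁.dist_param hδ0.le hδa, h₂.dist_param hw0.le (hwδ.trans hδb)] at h
  have hd23 : dist (g₂ w) (g₃ δ) ^ 2 =
      w ^ 2 + δ ^ 2 - 2 * w * δ * Real.cos (compAngle x (g₂ w) (g₃ δ)) := by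
    have h := dist_sq_compAngle x (g₂ w) (g₃ δ) hxg2 hxg3
    rwa [h₂.dist_param hw0.le (hwδ.trans hδb), h₃.dist_param hδ0.le hδc] at h
  have hang12 : compAngle x (g₁ δ) (g₂ w) < φ₁ := hF12 δ w hδ0 le_rfl hw0 hwδ
  have hang23 : compAngle x (g₂ w) (g₃ δ) < φ₂ := hF23 w δ hw0 hwδ hδ0 le_rfl
  have hcos12 : Real.cos φ₁ < Real.cos (compAngle x (g₁ δ) (g₂ w)) :=
    Real.cos_lt_cos_of_nonneg_of_le_pi (compAngle_nonneg _ _ _) (le_of_lt (by linarith)) hang12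
  have hcos23 : Real.cos φ₂ < Real.cos (compAngle x (g₂ w) (g₃ δ)) :=
    Real.cos_lt_cos_of_nonneg_of_le_pi (compAngle_nonneg _ _ _) (le_of_lt (by linarith)) hang23
  have hd12sq : dist (g₁ δ) (g₂ w) ^ 2 < A ^ 2 := by
    rw [hd12, hA2]
    have := mul_lt_mul_of_pos_left hcos12 (show (0:ℝ) < 2 * δ * w by positivity)
    linarith
  have hd12lt : dist (g₁ δ) (g₂ w) < A := lt_of_sq_lt_sq' dist_nonneg hA0 hd12sq
  have hd23sq : dist (g₂ w) (g₃ δ) ^ 2 < B ^ 2 := by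
    rw [hd23, hB2]
    have := mul_lt_mul_of_pos_left hcos23 (show (0:ℝ) < 2 * w * δ by positivity)
    linarith
  have hd23lt : dist (g₂ w) (g₃ δ) < B := lt_of_sq_lt_sq' dist_nonneg hB0 hd23sq
  have hCle : C ≤ dist (g₁ δ) (g₃ δ) := by
    have hcos : Real.cos θ ≤ Real.cos (φ₁ + φ₂) :=
      Real.cos_le_cos_of_nonneg_of_le_pi (by linarith) hθπ (by linarith)
    have hsq : C ^ 2 ≤ dist (g₁ δ) (g₃ δ) ^ 2 := by
      rw [hC2, hL]
      have := mul_le_mul_of_nonneg_left hcos (show (0:ℝ) ≤ 2 * δ * δ by positivity)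
      linarith
    exact le_of_sq_le_sq' (by linarith) dist_nonneg hsq
  have htri : dist (g₁ δ) (g₃ δ) ≤ dist (g₁ δ) (g₂ w) + dist (g₂ w) (g₃ δ) :=
    dist_triangle _ _ _
  linarith

end Aux

theorem stmt_0 {X : Type*} [MetricSpace X]
    (hX : IsGeodesicSpace X) (hCAT : SatisfiesCAT0 X)
    (m : ℕ) [NeZero m] (hm : 3 ≤ m)
    (v : ZMod m → X) (hv : Function.Injective v)
    (γ : ZMod m → ℝ → X)
    (hγ : ∀ i : ZMod m, IsGeodesic (v i) (v (i + 1)) (γ i)) :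
    ∑ i : ZMod m,
        alexAngle (v i) (v (i + 1)) (v (i - 1)) (γ i)
          (fun t => γ (i - 1) (dist (v (i - 1)) (v i) - t))
      ≤ ((m : ℝ) - 2) * Real.pi := by
  classical
  -- cast helpers
  have hc1 : ((1 : ℕ) : ZMod m) = 1 := Nat.cast_one
  have hadd1 : ∀ j : ℕ, ((j : ZMod m) + 1) = ((j + 1 : ℕ) : ZMod m) := by
    intro j; push_cast; ring
  have hsub1 : ∀ j : ℕ, 1 ≤ j → ((j - 1 : ℕ) : ZMod m) = (j : ZMod m) - 1 := by
    intro j hj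
    have h := hadd1 (j - 1)
    rw [show j - 1 + 1 = j by omega] at h
    exact eq_sub_of_add_eq h
  have hlast1 : (((m - 1 : ℕ) : ZMod m) + 1) = 0 := by
    rw [hadd1, show m - 1 + 1 = m by omega, ZMod.natCast_self]
  have h0sub : (0 : ZMod m) - 1 = ((m - 1 : ℕ) : ZMod m) :=
    (eq_sub_of_add_eq hlast1).symm
  -- distinctness helpers
  have hvne : ∀ i j : ℕ, i < m → j < m → i ≠ j → v i ≠ v j := by
    intro i j hi hj hij hv'
    apply hij
    have h := hv hv'
    have h2 := congrArg ZMod.val h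
    rwa [ZMod.val_cast_of_lt hi, ZMod.val_cast_of_lt hj] at h2
  have hvne0 : ∀ j : ℕ, 0 < j → j < m → v 0 ≠ v (j : ZMod m) := by
    intro j h1 h2
    have h := hvne 0 j (by omega) h2 (by omega)
    rwa [Nat.cast_zero] at h
  -- diagonal geodesics
  set σ : ℕ → ℝ → X := fun j => Classical.choose (hX (v 0) (v (j : ZMod m))) with hσd
  have hσ : ∀ j : ℕ, IsGeodesic (v 0) (v (j : ZMod m)) (σ j) := fun j =>
    Classical.choose_spec (hX (v 0) (v (j : ZMod m)))
  set S : ℕ → ℝ → X := fun j =>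
    if j = 1 then γ (0 : ZMod m)
    else if j = m - 1 then
      (fun t => γ ((m - 1 : ℕ) : ZMod m) (dist (v ((m - 1 : ℕ) : ZMod m)) (v 0) - t))
    else σ j with hSd
  have hS1 : S 1 = γ (0 : ZMod m) := by
    simp [hSd]
  have hSlast : S (m - 1) =
      (fun t => γ ((m - 1 : ℕ) : ZMod m) (dist (v ((m - 1 : ℕ) : ZMod m)) (v 0) - t)) := by
    simp only [hSd]
    rw [if_neg (by omega : ¬ (m - 1 = 1))]
    simp
  have hSmid : ∀ j : ℕ, 2 ≤ j → j ≤ m - 2 → S j = σ j := by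
    intro j h1 h2
    simp only [hSd]
    rw [if_neg (by omega), if_neg (by omega)]
  have hS : ∀ j : ℕ, 1 ≤ j → j ≤ m - 1 → IsGeodesic (v 0) (v (j : ZMod m)) (S j) := by
    intro j h1 h2
    by_cases hj1 : j = 1
    · subst hj1
      rw [hS1, hc1]
      have h := hγ 0
      rwa [zero_add] at h
    · by_cases hjm : j = m - 1
      · subst hjm
        rw [hSlast]
        have h := (hγ ((m - 1 : ℕ) : ZMod m)).rev
        simp only [hlast1] at h
        exact h
      · rw [hSmid j (by omega) (by omega)]
        exact hσ j
  -- the three angle families of the triangulation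
  set T : ℕ → ℝ := fun j => alexAngle (v (j : ZMod m)) (v ((j : ZMod m) + 1)) (v 0)
    (γ (j : ZMod m)) (fun t => S j (dist (v 0) (v (j : ZMod m)) - t)) with hT
  set Bv : ℕ → ℝ := fun j => alexAngle (v ((j : ZMod m) + 1)) (v 0) (v (j : ZMod m))
    (fun t => S (j + 1) (dist (v 0) (v ((j : ZMod m) + 1)) - t))
    (fun t => γ (j : ZMod m) (dist (v (j : ZMod m)) (v ((j : ZMod m) + 1)) - t)) with hBv
  set Cv : ℕ → ℝ := fun j => alexAngle (v 0) (v (j : ZMod m)) (v ((j : ZMod m) + 1))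
    (S j) (S (j + 1)) with hCv
  set φf : ZMod m → ℝ := fun i => alexAngle (v i) (v (i + 1)) (v (i - 1)) (γ i)
    (fun t => γ (i - 1) (dist (v (i - 1)) (v i) - t)) with hφf
  have hSnext : ∀ j : ℕ, 1 ≤ j → j ≤ m - 2 →
      IsGeodesic (v 0) (v ((j : ZMod m) + 1)) (S (j + 1)) := by
    intro j h1 h2
    rw [hadd1]
    exact hS (j + 1) (by omega) (by omega)
  -- triangle bound
  have htriangle : ∀ j : ℕ, 1 ≤ j → j ≤ m - 2 → T j + Bv j + Cv j ≤ π := by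
    intro j h1 h2
    have hjm : j < m := by omega
    have hjm1 : j + 1 < m := by omega
    have d1 : v (j : ZMod m) ≠ v ((j : ZMod m) + 1) := by
      rw [hadd1]; exact hvne j (j + 1) hjm hjm1 (by omega)
    have d2 : v ((j : ZMod m) + 1) ≠ v 0 := by
      rw [hadd1]; exact (hvne0 (j + 1) (by omega) hjm1).symm
    have d3 : v 0 ≠ v (j : ZMod m) := hvne0 j (by omega) hjm
    have hSj := hS j (by omega) (by omega)
    have hSj1 := hSnext j h1 h2
    have b1 : T j ≤ compAngle (v (j : ZMod m)) (v ((j : ZMod m) + 1)) (v 0) :=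
      alexAngle_le_endpoints hCAT (hγ (j : ZMod m)) hSj.rev d1 d3.symm
    have b2 : Bv j ≤ compAngle (v ((j : ZMod m) + 1)) (v 0) (v (j : ZMod m)) :=
      alexAngle_le_endpoints hCAT hSj1.rev (hγ (j : ZMod m)).rev d2 d1.symm
    have b3 : Cv j ≤ compAngle (v 0) (v (j : ZMod m)) (v ((j : ZMod m) + 1)) :=
      alexAngle_le_endpoints hCAT hSj hSj1 d3 d2.symm
    have hsum := compAngle_triangle_sum (v (j : ZMod m)) (v ((j : ZMod m) + 1)) (v 0) d1 d2 d3
    linarith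
  -- vertex bounds
  have hφ1 : φf ((1 : ℕ) : ZMod m) = T 1 := by
    simp only [hφf, hT, hS1, show ((1 : ℕ) : ZMod m) - 1 = 0 by push_cast; ring]
  have hφmid : ∀ j : ℕ, 2 ≤ j → j ≤ m - 2 → φf (j : ZMod m) ≤ T j + Bv (j - 1) := by
    intro j h2 hm2
    have hrev : IsGeodesic (v (j : ZMod m)) (v ((j : ZMod m) - 1))
        (fun t => γ ((j : ZMod m) - 1) (dist (v ((j : ZMod m) - 1)) (v (j : ZMod m)) - t)) := by
      have h := (hγ ((j : ZMod m) - 1)).rev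
      simp only [sub_add_cancel] at h
      exact h
    have hSj := hS j (by omega) (by omega)
    have d1 : v (j : ZMod m) ≠ v ((j : ZMod m) + 1) := by
      rw [hadd1]; exact hvne j (j + 1) (by omega) (by omega) (by omega)
    have d2 : v (j : ZMod m) ≠ v 0 := (hvne0 j (by omega) (by omega)).symm
    have d3 : v (j : ZMod m) ≠ v ((j : ZMod m) - 1) := by
      rw [← hsub1 j (by omega)]
      exact hvne j (j - 1) (by omega) (by omega) (by omega)
    have key := alexAngle_subadd hCAT (hγ (j : ZMod m)) hSj.rev hrev d1 d2 d3
    have hBeq : Bv (j - 1) = alexAngle (v (j : ZMod m)) (v 0) (v ((j : ZMod m) - 1))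
        (fun t => S j (dist (v 0) (v (j : ZMod m)) - t))
        (fun t => γ ((j : ZMod m) - 1) (dist (v ((j : ZMod m) - 1)) (v (j : ZMod m)) - t)) := by
      simp only [hBv, hsub1 j (by omega), sub_add_cancel, show j - 1 + 1 = j by omega]
    rw [hφf, hT, hBeq]
    exact key
  have hφlast : φf ((m - 1 : ℕ) : ZMod m) = Bv (m - 2) := by
    have hrevrev : (fun t => S (m - 1) (dist (v 0) (v ((m - 1 : ℕ) : ZMod m)) - t)) =
        γ ((m - 1 : ℕ) : ZMod m) := by
      rw [hSlast]
      funext t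
      simp only
      rw [dist_comm (v ((m - 1 : ℕ) : ZMod m)) (v 0)]
      congr 1
      ring
    have h21 : ((m - 2 : ℕ) : ZMod m) + 1 = ((m - 1 : ℕ) : ZMod m) := by
      rw [hadd1, show m - 2 + 1 = m - 1 by omega]
    have hm12 : ((m - 1 : ℕ) : ZMod m) - 1 = ((m - 2 : ℕ) : ZMod m) := by
      rw [show m - 2 = m - 1 - 1 by omega]
      exact (hsub1 (m - 1) (by omega)).symm
    simp only [hφf, hBv, show m - 2 + 1 = m - 1 by omega, h21, hm12, hlast1, hrevrev]
  -- the chain of diagonals at the vertex v 0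
  have chain : ∀ k : ℕ, 2 ≤ k → k ≤ m - 1 →
      alexAngle (v 0) (v ((1 : ℕ) : ZMod m)) (v (k : ZMod m)) (S 1) (S k) ≤
        ∑ j ∈ Finset.Ico 1 k, Cv j := by
    intro k hk2
    induction k, hk2 using Nat.le_induction with
    | base =>
      intro hkm
      have hCv1 : Cv 1 = alexAngle (v 0) (v ((1 : ℕ) : ZMod m)) (v ((2 : ℕ) : ZMod m))
          (S 1) (S 2) := by
        simp only [hCv, hadd1 1]
      have hsum1 : ∑ j ∈ Finset.Ico 1 2, Cv j = Cv 1 := by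
        rw [Finset.sum_Ico_succ_top (le_refl 1)]
        simp
      rw [hsum1, hCv1]
    | succ k hk ih =>
      intro hkm
      have hik := ih (by omega)
      have hsub := alexAngle_subadd hCAT (hS 1 (le_refl 1) (by omega))
        (hS k (by omega) (by omega)) (hS (k + 1) (by omega) (by omega))
        (hvne0 1 (by omega) (by omega)) (hvne0 k (by omega) (by omega))
        (hvne0 (k + 1) (by omega) (by omega))
      have hCvk : Cv k = alexAngle (v 0) (v (k : ZMod m)) (v ((k + 1 : ℕ) : ZMod m))
          (S k) (S (k + 1)) := by
        simp only [hCv, hadd1]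
      have hsplit : ∑ j ∈ Finset.Ico 1 (k + 1), Cv j =
          ∑ j ∈ Finset.Ico 1 k, Cv j + Cv k :=
        Finset.sum_Ico_succ_top (by omega) Cv
      rw [hsplit]
      calc alexAngle (v 0) (v ((1 : ℕ) : ZMod m)) (v ((k + 1 : ℕ) : ZMod m)) (S 1) (S (k + 1))
          ≤ alexAngle (v 0) (v ((1 : ℕ) : ZMod m)) (v (k : ZMod m)) (S 1) (S k) +
            alexAngle (v 0) (v (k : ZMod m)) (v ((k + 1 : ℕ) : ZMod m)) (S k) (S (k + 1)) :=
            hsub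
        _ ≤ ∑ j ∈ Finset.Ico 1 k, Cv j + Cv k := by
            rw [hCvk]
            exact add_le_add_left hik _
  have hφ0 : φf 0 ≤ ∑ j ∈ Finset.Ico 1 (m - 1), Cv j := by
    have h := chain (m - 1) (by omega) (le_refl _)
    have heq : φf 0 = alexAngle (v 0) (v ((1 : ℕ) : ZMod m)) (v ((m - 1 : ℕ) : ZMod m))
        (S 1) (S (m - 1)) := by
      rw [hS1, hSlast]
      simp only [hφf, h0sub, zero_add, hc1]
    rw [heq]
    exact h
  -- convert the sum over `ZMod m` to a sum over `Finset.range m`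
  have hbij : Function.Bijective (fun j : Fin m => ((j : ℕ) : ZMod m)) := by
    constructor
    · intro i j h
      have h2 := congrArg ZMod.val h
      rw [ZMod.val_cast_of_lt i.2, ZMod.val_cast_of_lt j.2] at h2
      exact Fin.ext h2
    · intro i
      exact ⟨⟨i.val, ZMod.val_lt i⟩, ZMod.natCast_rightInverse i⟩
  have hconv : (∑ i : ZMod m, φf i) = ∑ j ∈ Finset.range m, φf ((j : ℕ) : ZMod m) := by
    rw [← Fin.sum_univ_eq_sum_range (fun j => φf ((j : ℕ) : ZMod m)) m]
    exact (Fintype.sum_bijective _ hbij (fun j : Fin m => φf ((j : ℕ) : ZMod m)) φf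
      (fun j => rfl)).symm
  -- split the sum
  have hsplit0 : ∑ j ∈ Finset.range m, φf ((j : ℕ) : ZMod m) =
      φf ((0 : ℕ) : ZMod m) + ∑ j ∈ Finset.Ico 1 m, φf ((j : ℕ) : ZMod m) := by
    rw [Finset.range_eq_Ico]
    exact Finset.sum_eq_sum_Ico_succ_bot (by omega) _
  have hsplittop : ∑ j ∈ Finset.Ico 1 m, φf ((j : ℕ) : ZMod m) =
      ∑ j ∈ Finset.Ico 1 (m - 1), φf ((j : ℕ) : ZMod m) + φf ((m - 1 : ℕ) : ZMod m) := by
    rw [← Finset.sum_Ico_succ_top (by omega : 1 ≤ m - 1)]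
    congr 1 <;> omega
  have hsplitmid : ∑ j ∈ Finset.Ico 1 (m - 1), φf ((j : ℕ) : ZMod m) =
      φf ((1 : ℕ) : ZMod m) + ∑ j ∈ Finset.Ico 2 (m - 1), φf ((j : ℕ) : ZMod m) :=
    Finset.sum_eq_sum_Ico_succ_bot (by omega) _
  have hmidbound : ∑ j ∈ Finset.Ico 2 (m - 1), φf ((j : ℕ) : ZMod m) ≤
      ∑ j ∈ Finset.Ico 2 (m - 1), (T j + Bv (j - 1)) := by
    apply Finset.sum_le_sum
    intro j hj
    rw [Finset.mem_Ico] at hj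
    exact hφmid j hj.1 (by omega)
  have hTBsum : ∑ j ∈ Finset.Ico 2 (m - 1), (T j + Bv (j - 1)) =
      ∑ j ∈ Finset.Ico 2 (m - 1), T j + ∑ j ∈ Finset.Ico 2 (m - 1), Bv (j - 1) :=
    Finset.sum_add_distrib
  have hTsplit : T 1 + ∑ j ∈ Finset.Ico 2 (m - 1), T j = ∑ j ∈ Finset.Ico 1 (m - 1), T j :=
    (Finset.sum_eq_sum_Ico_succ_bot (by omega) T).symm
  have hBshift : ∑ j ∈ Finset.Ico 2 (m - 1), Bv (j - 1) =
      ∑ j ∈ Finset.Ico 1 (m - 2), Bv j := by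
    rw [Finset.sum_Ico_eq_sum_range, Finset.sum_Ico_eq_sum_range,
      show m - 1 - 2 = m - 2 - 1 by omega]
    apply Finset.sum_congr rfl
    intro i _
    congr 1 <;> omega
  have hBsplit : ∑ j ∈ Finset.Ico 1 (m - 2), Bv j + Bv (m - 2) =
      ∑ j ∈ Finset.Ico 1 (m - 1), Bv j := by
    rw [← Finset.sum_Ico_succ_top (by omega : 1 ≤ m - 2)]
    congr 1 <;> omega
  have hmain : ∑ j ∈ Finset.Ico 1 (m - 1), (T j + Bv j + Cv j) ≤ ((m : ℝ) - 2) * π := by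
    have hcard : (Finset.Ico 1 (m - 1)).card = m - 2 := by
      rw [Nat.card_Ico]
      omega
    have h := Finset.sum_le_card_nsmul (Finset.Ico 1 (m - 1))
      (fun j => T j + Bv j + Cv j) π
      (fun j hj => by
        rw [Finset.mem_Ico] at hj
        exact htriangle j hj.1 (by omega))
    rw [hcard] at h
    have : ((m - 2 : ℕ) : ℝ) = (m : ℝ) - 2 := by
      push_cast [Nat.cast_sub (by omega : 2 ≤ m)]
      ring
    rw [nsmul_eq_mul, this] at h
    exact h
  have hTBCsum : ∑ j ∈ Finset.Ico 1 (m - 1), (T j + Bv j + Cv j) =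
      ∑ j ∈ Finset.Ico 1 (m - 1), T j + ∑ j ∈ Finset.Ico 1 (m - 1), Bv j +
        ∑ j ∈ Finset.Ico 1 (m - 1), Cv j := by
    rw [Finset.sum_add_distrib, Finset.sum_add_distrib]
  have hφ0' : φf ((0 : ℕ) : ZMod m) ≤ ∑ j ∈ Finset.Ico 1 (m - 1), Cv j := by
    rwa [Nat.cast_zero]
  calc ∑ i : ZMod m, φf i
      = φf ((0 : ℕ) : ZMod m) + (φf ((1 : ℕ) : ZMod m) +
          ∑ j ∈ Finset.Ico 2 (m - 1), φf ((j : ℕ) : ZMod m) + φf ((m - 1 : ℕ) : ZMod m)) := by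
        rw [hconv, hsplit0, hsplittop, hsplitmid]
    _ ≤ ∑ j ∈ Finset.Ico 1 (m - 1), (T j + Bv j + Cv j) := by
        rw [hTBCsum]
        have := hmidbound
        rw [hTBsum, hBshift] at this
        linarith [hφ0', hφ1, hφlast, hTsplit, hBsplit, this]
    _ ≤ ((m : ℝ) - 2) * π := hmain
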